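/- Let H be a finite-dimensional Hopf algebra over a field k with bijective antipode S. Let t ∈ H be a nonzero left integral, let Λ : H → k be a nonzero right integral for H in H⁎ (Λ(h₁)·h₂ = Λ(h)·1 for all h ∈ H), and let g ∈ H be a grouplike element with x₁·Λ(x₂) = Λ(x)·g for all x ∈ H. Then t is cocommutative (t₁ ⊗ t₂ = t₂ ⊗ t₁ in H ⊗ H) if and only if S² = id_H and g = 1. -/

import Mathlib

/-!
Helper definitions for Sweedler-notation expressions in a Hopf algebra `H` over a field `k`.
-/

open TensorProduct

variable {k H : Type*} [Field k] [Ring H] [HopfAlgebra k H]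

/-- `swl f h = f(h₁) • h₂` in Sweedler notation. -/
noncomputable def swl (f : H →ₗ[k] k) : H →ₗ[k] H :=
  (TensorProduct.lid k H).toLinearMap ∘ₗ (f.rTensor H) ∘ₗ Coalgebra.comul

/-- `swr f h = f(h₂) • h₁` in Sweedler notation. -/
noncomputable def swr (f : H →ₗ[k] k) : H →ₗ[k] H :=
  (TensorProduct.rid k H).toLinearMap ∘ₗ (f.lTensor H) ∘ₗ Coalgebra.comul

/-- `sw2 f g h = f(h₁) * g(h₂)`, an element of `H`, in Sweedler notation. -/
noncomputable def sw2 (f g : H →ₗ[k] H) : H →ₗ[k] H :=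
  (LinearMap.mul' k H) ∘ₗ (TensorProduct.map f g) ∘ₗ Coalgebra.comul

/-- `sw2k f g h = f(h₁) * g(h₂)`, a scalar, in Sweedler notation. -/
noncomputable def sw2k (f g : H →ₗ[k] k) : H →ₗ[k] k :=
  (LinearMap.mul' k k) ∘ₗ (TensorProduct.map f g) ∘ₗ Coalgebra.comul

/-- `comul3 h = (h₁ ⊗ h₂) ⊗ h₃`, the iterated comultiplication `(Δ ⊗ id)Δ`. -/
noncomputable def comul3 : H →ₗ[k] (H ⊗[k] H) ⊗[k] H :=
  (LinearMap.rTensor H Coalgebra.comul) ∘ₗ Coalgebra.comul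

/-- `sw3 f g e h = f(h₁) * g(h₂) * e(h₃)`, an element of `H`, in Sweedler notation. -/
noncomputable def sw3 (f g e : H →ₗ[k] H) : H →ₗ[k] H :=
  (LinearMap.mul' k H) ∘ₗ
    (TensorProduct.map ((LinearMap.mul' k H) ∘ₗ TensorProduct.map f g) e) ∘ₗ comul3

/-! ### Auxiliary lemmas -/

/-- `aL f (∑ a ⊗ b) = ∑ f a • b`. -/
noncomputable def aL (f : H →ₗ[k] k) : H ⊗[k] H →ₗ[k] H :=
  (TensorProduct.lid k H).toLinearMap ∘ₗ (f.rTensor H)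

/-- `aR f (∑ a ⊗ b) = ∑ f b • a`. -/
noncomputable def aR (f : H →ₗ[k] k) : H ⊗[k] H →ₗ[k] H :=
  (TensorProduct.rid k H).toLinearMap ∘ₗ (f.lTensor H)

@[simp] lemma aL_tmul (f : H →ₗ[k] k) (x y : H) : aL f (x ⊗ₜ[k] y) = f x • y := by
  simp [aL]

@[simp] lemma aR_tmul (f : H →ₗ[k] k) (x y : H) : aR f (x ⊗ₜ[k] y) = f y • x := by
  simp [aR]

lemma aL_add (f g : H →ₗ[k] k) (v : H ⊗[k] H) : aL (f + g) v = aL f v + aL g v := by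
  induction v using TensorProduct.induction_on with
  | zero => simp
  | tmul a b => simp [add_smul]
  | add v w hv hw => simp only [map_add, hv, hw]; abel

lemma aL_smul (c : k) (f : H →ₗ[k] k) (v : H ⊗[k] H) : aL (c • f) v = c • aL f v := by
  induction v using TensorProduct.induction_on with
  | zero => simp
  | tmul a b => simp [mul_smul]
  | add v w hv hw => simp only [map_add, hv, hw, smul_add]

lemma aL_zero (v : H ⊗[k] H) : aL (0 : H →ₗ[k] k) v = 0 := by
  induction v using TensorProduct.induction_on with
  | zero => simp
  | tmul a b => simp
  | add v w hv hw => simp only [map_add, hv, hw, add_zero]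

lemma aL_one_mul (f : H →ₗ[k] k) (x : H) (v : H ⊗[k] H) :
    aL f (((1 : H) ⊗ₜ[k] x) * v) = x * aL f v := by
  induction v using TensorProduct.induction_on with
  | zero => simp
  | tmul a b => simp [Algebra.TensorProduct.tmul_mul_tmul, mul_smul_comm]
  | add v w hv hw => simp [mul_add, hv, hw]

lemma aL_mul_one (f : H →ₗ[k] k) (x : H) (v : H ⊗[k] H) :
    aL f ((x ⊗ₜ[k] (1 : H)) * v) = aL (f ∘ₗ LinearMap.mulLeft k x) v := by
  induction v using TensorProduct.induction_on with
  | zero => simp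
  | tmul a b => simp [Algebra.TensorProduct.tmul_mul_tmul]
  | add v w hv hw => simp [mul_add, hv, hw]

lemma aR_one_mul (f : H →ₗ[k] k) (x : H) (v : H ⊗[k] H) :
    aR f (((1 : H) ⊗ₜ[k] x) * v) = aR (f ∘ₗ LinearMap.mulLeft k x) v := by
  induction v using TensorProduct.induction_on with
  | zero => simp
  | tmul a b => simp [Algebra.TensorProduct.tmul_mul_tmul]
  | add v w hv hw => simp [mul_add, hv, hw]

lemma aR_mul_one (f : H →ₗ[k] k) (x : H) (v : H ⊗[k] H) :
    aR f ((x ⊗ₜ[k] (1 : H)) * v) = x * aR f v := by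
  induction v using TensorProduct.induction_on with
  | zero => simp
  | tmul a b => simp [Algebra.TensorProduct.tmul_mul_tmul, mul_smul_comm]
  | add v w hv hw => simp [mul_add, hv, hw]

lemma aL_comm (f : H →ₗ[k] k) (v : H ⊗[k] H) :
    aL f (TensorProduct.comm k H H v) = aR f v := by
  induction v using TensorProduct.induction_on with
  | zero => simp
  | tmul a b => simp
  | add v w hv hw => simp [hv, hw]

lemma lmul_aL (Λ : H →ₗ[k] k) (f : H →ₗ[k] k) (x : H) (v : H ⊗[k] H) :
    Λ (x * aL f v) = f (aR (Λ ∘ₗ LinearMap.mulLeft k x) v) := by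
  induction v using TensorProduct.induction_on with
  | zero => simp
  | tmul a b => simp [mul_smul_comm, mul_comm]
  | add v w hv hw => simp [mul_add, hv, hw]

lemma basis_rep {ι : Type*} [Fintype ι] (B : Module.Basis ι k H) (v : H ⊗[k] H) :
    v = ∑ j, B j ⊗ₜ[k] aL (B.coord j) v := by
  induction v using TensorProduct.induction_on with
  | zero => simp
  | tmul x y =>
      simp only [aL_tmul, Module.Basis.coord_apply]
      calc x ⊗ₜ[k] y = (∑ j, (B.repr x) j • B j) ⊗ₜ[k] y := by rw [B.sum_repr x]
        _ = ∑ j, B j ⊗ₜ[k] ((B.repr x) j • y) := by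
            rw [TensorProduct.sum_tmul]
            exact Finset.sum_congr rfl fun j _ => by
              rw [TensorProduct.smul_tmul]
  | add v w hv hw =>
      simp only [map_add, TensorProduct.tmul_add, Finset.sum_add_distrib]
      exact congrArg₂ (· + ·) hv hw

lemma aL_ext {v w : H ⊗[k] H} [FiniteDimensional k H]
    (hv : ∀ f : H →ₗ[k] k, aL f v = aL f w) : v = w := by
  let B := Module.finBasis k H
  rw [basis_rep B v, basis_rep B w]
  exact Finset.sum_congr rfl fun j _ => by rw [hv (B.coord j)]

lemma F1core (u : H ⊗[k] H)
    (hu : ∀ y : H, Coalgebra.comul (R := k) y * u = Coalgebra.counit (R := k) y • u) (h : H) :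
    ((HopfAlgebra.antipode (R := k) h) ⊗ₜ[k] (1 : H)) * u = ((1 : H) ⊗ₜ[k] h) * u := by
  classical
  set S : H →ₗ[k] H := HopfAlgebra.antipode (R := k) with hSdef
  let ν : H ⊗[k] (H ⊗[k] H) →ₗ[k] H ⊗[k] H :=
    ((LinearMap.mul' k H).rTensor H) ∘ₗ (TensorProduct.assoc k H H H).symm.toLinearMap
  have hν : ∀ (x : H) (w : H ⊗[k] H), ν (x ⊗ₜ[k] w) = (x ⊗ₜ[k] (1 : H)) * w := by
    intro x w
    induction w using TensorProduct.induction_on with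
    | zero => simp only [TensorProduct.tmul_zero, map_zero, mul_zero]
    | tmul y z => simp [ν, Algebra.TensorProduct.tmul_mul_tmul]
    | add v w hv hw =>
        simp only [TensorProduct.tmul_add, map_add, mul_add, hv, hw]
  let Φ : H ⊗[k] (H ⊗[k] H) →ₗ[k] H ⊗[k] H :=
    ν ∘ₗ TensorProduct.map S (LinearMap.mulRight k u)
  have hΦ : ∀ (x : H) (w : H ⊗[k] H), Φ (x ⊗ₜ[k] w) = ((S x) ⊗ₜ[k] (1 : H)) * (w * u) := by
    intro x w
    simp only [Φ, LinearMap.comp_apply, TensorProduct.map_tmul, LinearMap.mulRight_apply, hν]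
  let r := Coalgebra.Repr.arbitrary k h
  let rL : ∀ i : r.ι, Coalgebra.Repr k (r.left i) (H × H) := fun i => Coalgebra.Repr.arbitrary k (r.left i)
  let rR : ∀ i : r.ι, Coalgebra.Repr k (r.right i) (H × H) := fun i => Coalgebra.Repr.arbitrary k (r.right i)
  have e1 : ((1 : H) ⊗ₜ[k] h) = ∑ i ∈ r.index, (algebraMap k H (Coalgebra.counit (r.left i))) ⊗ₜ[k] r.right i := by
    have := congrArg (LinearMap.rTensor H (Algebra.linearMap k H)) (Coalgebra.sum_counit_tmul_eq r)
    simp only [map_sum, LinearMap.rTensor_tmul, Algebra.linearMap_apply, map_one] at this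
    exact this.symm
  have e2 : ∑ i ∈ r.index, Coalgebra.counit (R := k) (r.right i) • r.left i = h := by
    have := congrArg (TensorProduct.rid k H) (Coalgebra.sum_tmul_counit_eq r)
    simp only [map_sum, TensorProduct.rid_tmul, one_smul] at this
    exact this
  have e3 : ∑ i ∈ r.index, Coalgebra.counit (R := k) (r.right i) • S (r.left i) = S h := by
    conv_rhs => rw [← e2]
    rw [map_sum]
    exact Finset.sum_congr rfl fun i _ => (map_smul S _ _).symm
  symm
  calc ((1 : H) ⊗ₜ[k] h) * u
      = ∑ i ∈ r.index, ((algebraMap k H (Coalgebra.counit (r.left i))) ⊗ₜ[k] r.right i) * u := by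
        rw [e1, Finset.sum_mul]
    _ = ∑ i ∈ r.index, ∑ j ∈ (rL i).index,
          Φ ((rL i).left j ⊗ₜ[k] ((rL i).right j ⊗ₜ[k] r.right i)) := by
        refine Finset.sum_congr rfl fun i _ => ?_
        rw [← HopfAlgebra.sum_antipode_mul_eq_algebraMap_counit (rL i), TensorProduct.sum_tmul, Finset.sum_mul]
        refine Finset.sum_congr rfl fun j _ => ?_
        rw [hΦ, ← mul_assoc, Algebra.TensorProduct.tmul_mul_tmul, one_mul]
    _ = Φ (∑ i ∈ r.index, ∑ j ∈ (rL i).index,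
          (rL i).left j ⊗ₜ[k] ((rL i).right j ⊗ₜ[k] r.right i)) := by
        rw [map_sum]
        exact Finset.sum_congr rfl fun i _ => (map_sum Φ _ _).symm
    _ = Φ (∑ i ∈ r.index, ∑ j ∈ (rR i).index,
          r.left i ⊗ₜ[k] ((rR i).left j ⊗ₜ[k] (rR i).right j)) := by
        rw [Coalgebra.sum_tmul_tmul_eq r rL rR]
    _ = ∑ i ∈ r.index, Φ (r.left i ⊗ₜ[k] Coalgebra.comul (r.right i)) := by
        rw [map_sum]
        refine Finset.sum_congr rfl fun i _ => ?_
        rw [← (rR i).eq, TensorProduct.tmul_sum, map_sum]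
    _ = ∑ i ∈ r.index, Coalgebra.counit (R := k) (r.right i) • (((S (r.left i)) ⊗ₜ[k] (1:H)) * u) := by
        refine Finset.sum_congr rfl fun i _ => ?_
        rw [hΦ, hu, mul_smul_comm]
    _ = ((∑ i ∈ r.index, Coalgebra.counit (R := k) (r.right i) • S (r.left i)) ⊗ₜ[k] (1:H)) * u := by
        rw [TensorProduct.sum_tmul, Finset.sum_mul]
        refine Finset.sum_congr rfl fun i _ => ?_
        rw [← smul_mul_assoc, TensorProduct.smul_tmul']
    _ = ((S h) ⊗ₜ[k] (1:H)) * u := by rw [e3]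

lemma key_rep [FiniteDimensional k H] (t : H) (f : H →ₗ[k] k) :
    ∃ (n : ℕ) (d : Fin n → H) (c : Fin n → (H →ₗ[k] k)),
      f t • (1 : H) = ∑ j, d j * aL (c j) (Coalgebra.comul t) := by
  classical
  set S : H →ₗ[k] H := HopfAlgebra.antipode (R := k) with hSdef
  let B := Module.finBasis k H
  set u : H ⊗[k] H := Coalgebra.comul t with hudef
  let w : Fin (Module.finrank k H) → H := fun j => aL (B.coord j) u
  have hrep : ∑ j ∈ Finset.univ, B j ⊗ₜ[k] w j = Coalgebra.comul t := (basis_rep B u).symm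
  let r : Coalgebra.Repr k t (Fin (Module.finrank k H)) := ⟨Finset.univ, fun j => B j, w, hrep⟩
  let rL : ∀ i : r.ι, Coalgebra.Repr k (r.left i) (H × H) := fun i => Coalgebra.Repr.arbitrary k (r.left i)
  let rR : ∀ i : r.ι, Coalgebra.Repr k (r.right i) (H × H) := fun i => Coalgebra.Repr.arbitrary k (r.right i)
  let Ψ : H ⊗[k] (H ⊗[k] H) →ₗ[k] H :=
    aL f ∘ₗ LinearMap.lTensor H ((LinearMap.mul' k H) ∘ₗ S.rTensor H)
  have hΨ : ∀ x y z : H, Ψ (x ⊗ₜ[k] (y ⊗ₜ[k] z)) = f x • ((S y) * z) := by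
    intro x y z
    simp [Ψ]
  have e2 : ∑ i : Fin (Module.finrank k H), Coalgebra.counit (R := k) (w i) • B i = t := by
    have := congrArg (TensorProduct.rid k H) (Coalgebra.sum_tmul_counit_eq r)
    simp only [map_sum, TensorProduct.rid_tmul, one_smul] at this
    exact this
  have main := congrArg Ψ (Coalgebra.sum_tmul_tmul_eq r rL rR)
  refine ⟨Module.finrank k H,
    fun j => ∑ l ∈ (rL j).index, f ((rL j).left l) • S ((rL j).right l),
    fun j => B.coord j, ?_⟩
  have hL : Ψ (∑ i ∈ r.index, ∑ j ∈ (rL i).index,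
        (rL i).left j ⊗ₜ[k] ((rL i).right j ⊗ₜ[k] r.right i))
      = ∑ j : Fin (Module.finrank k H),
          (∑ l ∈ (rL j).index, f ((rL j).left l) • S ((rL j).right l)) * w j := by
    rw [map_sum]
    refine Finset.sum_congr rfl fun i _ => ?_
    rw [map_sum, Finset.sum_mul]
    refine Finset.sum_congr rfl fun l _ => ?_
    rw [hΨ, smul_mul_assoc]
  have hR : Ψ (∑ i ∈ r.index, ∑ j ∈ (rR i).index,
        r.left i ⊗ₜ[k] ((rR i).left j ⊗ₜ[k] (rR i).right j))
      = f t • (1 : H) := by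
    rw [map_sum]
    have hterm : ∀ i, Ψ (∑ j ∈ (rR i).index,
        r.left i ⊗ₜ[k] ((rR i).left j ⊗ₜ[k] (rR i).right j))
        = (Coalgebra.counit (R := k) (w i) * f (B i)) • (1 : H) := by
      intro i
      rw [map_sum]
      have h1 : ∑ j ∈ (rR i).index, Ψ (r.left i ⊗ₜ[k] ((rR i).left j ⊗ₜ[k] (rR i).right j))
          = f (B i) • ∑ j ∈ (rR i).index, S ((rR i).left j) * (rR i).right j := by
        rw [Finset.smul_sum]
        exact Finset.sum_congr rfl fun l _ => hΨ _ _ _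
      rw [h1, HopfAlgebra.sum_antipode_mul_eq_smul (rR i), smul_smul, mul_comm]
    refine (Finset.sum_congr rfl fun i _ => hterm i).trans ?_
    rw [← Finset.sum_smul]
    congr 1
    conv_rhs => rw [← e2]
    rw [map_sum]
    exact Finset.sum_congr rfl fun i _ => by rw [map_smul, smul_eq_mul]
  calc f t • (1 : H) = _ := hR.symm
    _ = _ := (congrArg Ψ (Coalgebra.sum_tmul_tmul_eq r rL rR)).symm
    _ = ∑ j : Fin (Module.finrank k H),
          (∑ l ∈ (rL j).index, f ((rL j).left l) • S ((rL j).right l)) * w j := hL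

theorem statement8 [FiniteDimensional k H]
    (hS : Function.Bijective ⇑(HopfAlgebra.antipode (R := k) (A := H)))
    (t : H) (ht0 : t ≠ 0)
    (htl : ∀ h : H, h * t = Coalgebra.counit (R := k) h • t)
    (Λ : H →ₗ[k] k) (hΛ0 : Λ ≠ 0)
    (hΛr : ∀ h : H, swl Λ h = Λ h • (1 : H))
    (g : H) (hg : Coalgebra.comul (R := k) g = g ⊗ₜ[k] g)
    (hgε : Coalgebra.counit (R := k) g = 1)
    (hgΛ : ∀ x : H, swr Λ x = Λ x • g) :
    (TensorProduct.comm k H H) (Coalgebra.comul (R := k) t) = Coalgebra.comul (R := k) t ↔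
      ((∀ h : H, HopfAlgebra.antipode (R := k) (HopfAlgebra.antipode (R := k) h) = h) ∧
        g = 1) := by
  classical
  set S : H →ₗ[k] H := HopfAlgebra.antipode (R := k) with hSdef
  set u : H ⊗[k] H := Coalgebra.comul t with hudef
  have hu : ∀ y : H, Coalgebra.comul (R := k) y * u = Coalgebra.counit (R := k) y • u := by
    intro y
    rw [hudef, ← Bialgebra.comul_mul, htl y, map_smul]
  have hF1 : ∀ h : H, ((S h) ⊗ₜ[k] (1 : H)) * u = ((1 : H) ⊗ₜ[k] h) * u := F1core u hu
  have haLu : aL Λ u = Λ t • 1 := hΛr t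
  have haRu : aR Λ u = Λ t • g := hgΛ t
  have F3 : ∀ h : H, aL (Λ ∘ₗ LinearMap.mulLeft k (S h)) u = Λ t • h := by
    intro h
    rw [← aL_mul_one, hF1 h, aL_one_mul, haLu, mul_smul_comm, mul_one]
  have F2 : ∀ h : H, aR (Λ ∘ₗ LinearMap.mulLeft k h) u = Λ t • (S h * g) := by
    intro h
    rw [← aR_one_mul, ← hF1 h, aR_mul_one, haRu, mul_smul_comm]
  -- the map Θ and its range W
  let Θ : (H →ₗ[k] k) →ₗ[k] H :=
    { toFun := fun f => aL f u
      map_add' := fun f f' => aL_add f f' u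
      map_smul' := fun c f => aL_smul c f u }
  have hWmul : ∀ (x : H) (f : H →ₗ[k] k), x * Θ f ∈ LinearMap.range Θ := by
    intro x f
    refine ⟨f ∘ₗ LinearMap.mulLeft k (S x), ?_⟩
    show aL (f ∘ₗ LinearMap.mulLeft k (S x)) u = x * aL f u
    rw [← aL_mul_one, hF1 x, aL_one_mul]
  have h1W : (1 : H) ∈ LinearMap.range Θ := by
    obtain ⟨f₀, hf₀⟩ : ∃ f : H →ₗ[k] k, f t = 1 := by
      have := (Module.forall_dual_apply_eq_zero_iff k t).not.mpr ht0
      push_neg at this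
      obtain ⟨φ, hφ⟩ := this
      exact ⟨(φ t)⁻¹ • φ, by simp [inv_mul_cancel₀ hφ]⟩
    obtain ⟨n, d, c, hrep⟩ := key_rep t f₀
    rw [hf₀, one_smul] at hrep
    rw [hrep]
    exact Submodule.sum_mem _ fun j _ => hWmul (d j) (c j)
  have hΛt : Λ t ≠ 0 := by
    intro h0
    apply hΛ0
    ext x
    obtain ⟨f₁, hf₁⟩ := h1W
    have hz : Λ (x * Θ f₁) = 0 := by
      show Λ (x * aL f₁ u) = 0
      rw [lmul_aL, F2 x, h0, zero_smul, map_zero]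
    rw [hf₁, mul_one] at hz
    simpa using hz
  have hS1 : S (1 : H) = 1 := by
    have h1 := HopfAlgebra.mul_antipode_rTensor_comul_apply (R := k) (A := H) (1 : H)
    have hc1 : Coalgebra.comul (R := k) (1 : H) = 1 := map_one (Bialgebra.comulAlgHom k H)
    rw [hc1, Algebra.TensorProduct.one_def] at h1
    exact HopfAlgebra.antipode_one
  constructor
  · intro hcc
    have hmain : ∀ h : H, h = S (S h) * g := by
      intro h
      have h1 : aL (Λ ∘ₗ LinearMap.mulLeft k (S h)) u = aR (Λ ∘ₗ LinearMap.mulLeft k (S h)) u := by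
        conv_lhs => rw [← hcc, aL_comm]
      have h2 : Λ t • h = Λ t • (S (S h) * g) := by
        rw [← F3 h, h1, F2 (S h)]
      exact smul_right_injective H hΛt h2
    have hg1 : g = 1 := by
      have := hmain 1
      rw [hS1, hS1, one_mul] at this
      exact this.symm
    refine ⟨fun h => ?_, hg1⟩
    have := hmain h
    rw [hg1, mul_one] at this
    exact this.symm
  · rintro ⟨hS2, hg1⟩
    -- surjectivity of h ↦ Λ ∘ mulLeft (S h)
    let φ : H →ₗ[k] (H →ₗ[k] k) :=
      { toFun := fun h => Λ ∘ₗ LinearMap.mulLeft k (S h)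
        map_add' := by
          intro a b
          ext x
          simp [add_mul]
        map_smul' := by
          intro c a
          ext x
          simp [smul_mul_assoc] }
    have hφinj : Function.Injective φ := by
      intro a b hab
      have h' : aL (Λ ∘ₗ LinearMap.mulLeft k (S a)) u
          = aL (Λ ∘ₗ LinearMap.mulLeft k (S b)) u :=
        congrArg (fun f => aL f u) hab
      rw [F3 a, F3 b] at h'
      exact smul_right_injective H hΛt h'
    have hφsurj : Function.Surjective φ :=
      (LinearMap.injective_iff_surjective_of_finrank_eq_finrank
        (Subspace.dual_finrank_eq (V := H)).symm).mp hφinj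
    apply aL_ext
    intro f
    obtain ⟨h, rfl⟩ := hφsurj f
    show aL (Λ ∘ₗ LinearMap.mulLeft k (S h)) (TensorProduct.comm k H H u)
        = aL (Λ ∘ₗ LinearMap.mulLeft k (S h)) u
    rw [aL_comm, F2 (S h), hS2 h, hg1, mul_one, F3 h]
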